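/- The set f of almost convergent real sequences is a closed linear subspace of the Banach space ℓ∞ of bounded sequences with the supremum norm. -/

import Mathlib

open Filter

/-- The Cesàro-type mean `t_{mn}(x) = (1/(m+1)) ∑_{i=0}^m x_{n+i}`. -/
noncomputable def tmn (x : ℕ → ℝ) (m n : ℕ) : ℝ :=
  (1 / (m + 1 : ℝ)) * ∑ i ∈ Finset.range (m + 1), x (n + i)

/-- `x` is almost convergent to `L`: `t_{mn}(x) → L` as `m → ∞`, uniformly in `n`. -/
def AlmostConvergentTo (x : ℕ → ℝ) (L : ℝ) : Prop :=
  TendstoUniformly (fun m n => tmn x m n) (fun _ => L) atTop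

/-- The set of almost convergent sequences inside `ℓ∞`. -/
def almostConvSet : Set (lp (fun _ : ℕ => ℝ) ⊤) :=
  {x | ∃ L, AlmostConvergentTo (fun n => x n) L}

lemma tmn_add (x y : ℕ → ℝ) (m n : ℕ) :
    tmn (x + y) m n = tmn x m n + tmn y m n := by
  simp [tmn, Finset.sum_add_distrib, mul_add]

lemma tmn_sub (x y : ℕ → ℝ) (m n : ℕ) :
    tmn (x - y) m n = tmn x m n - tmn y m n := by
  simp [tmn, Finset.sum_sub_distrib, mul_sub]

lemma tmn_smul (c : ℝ) (x : ℕ → ℝ) (m n : ℕ) :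
    tmn (c • x) m n = c * tmn x m n := by
  simp only [tmn, Pi.smul_apply, smul_eq_mul, ← Finset.mul_sum]; ring

lemma tmn_bound {x : ℕ → ℝ} {C : ℝ} (h : ∀ i, |x i| ≤ C) (m n : ℕ) :
    |tmn x m n| ≤ C := by
  have hm : (0:ℝ) < m + 1 := by positivity
  have : |∑ i ∈ Finset.range (m + 1), x (n + i)| ≤ (m + 1) * C := by
    calc |∑ i ∈ Finset.range (m + 1), x (n + i)|
        ≤ ∑ i ∈ Finset.range (m + 1), |x (n + i)| := Finset.abs_sum_le_sum_abs _ _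
      _ ≤ ∑ _i ∈ Finset.range (m + 1), C := Finset.sum_le_sum fun i _ => h _
      _ = (m + 1) * C := by simp [mul_comm]
  rw [tmn, abs_mul, abs_of_pos (by positivity : (0:ℝ) < 1 / (m+1))]
  calc 1 / (m + 1 : ℝ) * |∑ i ∈ Finset.range (m + 1), x (n + i)|
      ≤ 1 / (m + 1 : ℝ) * ((m + 1) * C) := by
        exact mul_le_mul_of_nonneg_left this (by positivity)
    _ = C := by field_simp

lemma tmn_lp_bound (y : lp (fun _ : ℕ => ℝ) ⊤) (m n : ℕ) :
    |tmn (fun i => y i) m n| ≤ ‖y‖ :=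
  tmn_bound (fun i => lp.norm_apply_le_norm ENNReal.top_ne_zero y i) m n

theorem almostConv_closed_subspace :
    ∃ S : Submodule ℝ (lp (fun _ : ℕ => ℝ) ⊤),
      (S : Set (lp (fun _ : ℕ => ℝ) ⊤)) = almostConvSet ∧
      IsClosed (S : Set (lp (fun _ : ℕ => ℝ) ⊤)) := by
  refine ⟨{ carrier := almostConvSet
            add_mem' := ?_
            zero_mem' := ?_
            smul_mem' := ?_ }, rfl, ?_⟩
  · rintro a b ⟨La, ha⟩ ⟨Lb, hb⟩
    refine ⟨La + Lb, ?_⟩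
    have : TendstoUniformly (fun m n => tmn (fun i => a i) m n + tmn (fun i => b i) m n)
        (fun _ => La + Lb) atTop := ha.add hb
    have key : (fun m n => tmn (fun i => (a + b) i) m n)
        = fun m n => tmn (fun i => a i) m n + tmn (fun i => b i) m n := by
      funext m n
      have : (fun i => (a + b) i) = (fun i => a i) + (fun i => b i) := by
        funext i; simp [lp.coeFn_add]
      rw [this, tmn_add]
    unfold AlmostConvergentTo
    rw [key]; exact this
  · refine ⟨0, ?_⟩
    have : (fun m n => tmn (fun i => (0 : lp (fun _ : ℕ => ℝ) ⊤) i) m n)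
        = fun (_ : ℕ) (_ : ℕ) => (0 : ℝ) := by
      funext m n; simp [tmn]
    unfold AlmostConvergentTo
    rw [this, Metric.tendstoUniformly_iff]
    intro ε hε; filter_upwards with m n; simpa using hε
  · rintro c a ⟨La, ha⟩
    refine ⟨c * La, ?_⟩
    rw [AlmostConvergentTo, Metric.tendstoUniformly_iff] at ha ⊢
    intro ε hε
    rcases eq_or_ne c 0 with rfl | hc
    · filter_upwards with m n
      have : (fun i => ((0 : ℝ) • a) i) = fun _ => (0 : ℝ) := by
        funext i; simp [lp.coeFn_smul]
      simp [this, tmn, hε]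
    · have hc' : 0 < |c| := abs_pos.mpr hc
      filter_upwards [ha (ε / |c|) (by positivity)] with m hm n
      have h1 : (fun i => (c • a) i) = c • (fun i => a i) := by
        funext i; simp [lp.coeFn_smul]
      rw [h1, tmn_smul]
      have := hm n
      rw [Real.dist_eq] at this ⊢
      calc |c * La - c * tmn (fun i => a i) m n| = |c| * |La - tmn (fun i => a i) m n| := by
            rw [← abs_mul]; ring_nf
        _ < |c| * (ε / |c|) := by exact mul_lt_mul_of_pos_left this hc'
        _ = ε := by field_simp
  · set_option synthInstance.maxHeartbeats 1000000 in
    apply IsSeqClosed.isClosed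
    intro u x hu hux
    choose L hL using hu
    -- L is Cauchy
    have hLL : ∀ j k, |L j - L k| ≤ ‖u j - u k‖ := by
      intro j k
      have hj := (hL j).tendsto_at 0
      have hk := (hL k).tendsto_at 0
      have hsub : Tendsto (fun m => tmn (fun i => u j i) m 0 - tmn (fun i => u k i) m 0)
          atTop (nhds (L j - L k)) := hj.sub hk
      refine le_of_tendsto (hsub.abs) ?_
      filter_upwards with m
      have : tmn (fun i => u j i) m 0 - tmn (fun i => u k i) m 0
          = tmn (fun i => (u j - u k) i) m 0 := by
        rw [show (fun i => (u j - u k) i) = (fun i => u j i) - (fun i => u k i) by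
          funext i; simp [lp.coeFn_sub], tmn_sub]
      rw [this]; exact tmn_lp_bound _ _ _
    have hcauchy : CauchySeq L := by
      rw [Metric.cauchySeq_iff]
      intro ε hε
      obtain ⟨N, hN⟩ := (Metric.cauchySeq_iff.mp hux.cauchySeq) ε hε
      exact ⟨N, fun j hj k hk => lt_of_le_of_lt (by
        rw [Real.dist_eq]
        calc |L j - L k| ≤ ‖u j - u k‖ := hLL j k
          _ = dist (u j) (u k) := (dist_eq_norm _ _).symm) (hN j hj k hk)⟩
    obtain ⟨Lx, hLx⟩ := cauchySeq_tendsto_of_complete hcauchy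
    refine ⟨Lx, ?_⟩
    rw [AlmostConvergentTo, Metric.tendstoUniformly_iff]
    intro ε hε
    -- choose k with ‖u k - x‖ < ε/3 and |L k - Lx| < ε/3
    have h1 : ∀ᶠ k in atTop, dist (u k) x < ε / 3 :=
      (Metric.tendsto_nhds.mp hux) (ε / 3) (by positivity)
    have h2 : ∀ᶠ k in atTop, dist (L k) Lx < ε / 3 :=
      (Metric.tendsto_nhds.mp hLx) (ε / 3) (by positivity)
    obtain ⟨k, hk1, hk2⟩ := (h1.and h2).exists
    have hk3 := (Metric.tendstoUniformly_iff.mp (hL k)) (ε / 3) (by positivity)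
    filter_upwards [hk3] with m hm n
    have hdiff : |tmn (fun i => u k i) m n - tmn (fun i => x i) m n| < ε / 3 := by
      have : tmn (fun i => u k i) m n - tmn (fun i => x i) m n
          = tmn (fun i => (u k - x) i) m n := by
        rw [show (fun i => (u k - x) i) = (fun i => u k i) - (fun i => x i) by
          funext i; simp [lp.coeFn_sub], tmn_sub]
      rw [this]
      exact lt_of_le_of_lt (tmn_lp_bound _ _ _) (by rwa [dist_eq_norm] at hk1)
    have hm' := hm n
    rw [Real.dist_eq] at hm' hk2 ⊢
    calc |Lx - tmn (fun i => x i) m n|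
        ≤ |Lx - L k| + |L k - tmn (fun i => u k i) m n|
          + |tmn (fun i => u k i) m n - tmn (fun i => x i) m n| := by
          have := abs_sub_le Lx (L k) (tmn (fun i => x i) m n)
          have h2 := abs_sub_le (L k) (tmn (fun i => u k i) m n) (tmn (fun i => x i) m n)
          linarith
      _ < ε / 3 + ε / 3 + ε / 3 := by
          have : |Lx - L k| = |L k - Lx| := abs_sub_comm _ _
          rw [this]
          exact add_lt_add (add_lt_add hk2 hm') hdiff
      _ = ε := by ring
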